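/- Let σ ∈ S_n, let r ≥ 0, let S = (s^1,…,s^n) ∈ (ℕ^r)^n, and let τ = σ_∅(S) be the reading permutation of S with respect to the empty set R = ∅. Then Des_{∅,S}(σ) = des(τ^{−1}σ), where des(π) = { i ∈ {1,…,n−1} : π_i > π_{i+1} } is the ordinary descent set. -/

import Mathlib

open scoped Classical

namespace RomeroComaj

noncomputable section

/-- `Seq r` is `ℕ^r`, the type of sequences of natural numbers of length `r`. -/
abbrev Seq (r : ℕ) := Fin r → ℕ

/-- strict lexicographic order on `ℕ^r`. -/
def lexLt {r : ℕ} (a b : Seq r) : Prop :=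
  ∃ i : Fin r, (∀ j : Fin r, j < i → a j = b j) ∧ a i < b i

/-- weak lexicographic order on `ℕ^r`. -/
def lexLe {r : ℕ} (a b : Seq r) : Prop :=
  lexLt a b ∨ a = b

/-- `RNbr R a b` : the (1-indexed) indices `a` and `b` are `R`-neighbors,
i.e. (for `a < b`) all of `a, a+1, …, b-1` lie in `R`. -/
def RNbr (R : Finset ℕ) (a b : ℕ) : Prop :=
  ∀ t ∈ Finset.Ico (min a b) (max a b), t ∈ R

/-- the value `σ_i` of the one-line notation of `σ`, both position `i` and
the value being 1-indexed (junk value `0` outside `1 ≤ i ≤ n`). -/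
def pget {n : ℕ} (σ : Equiv.Perm (Fin n)) (i : ℕ) : ℕ :=
  if h : i - 1 < n then (σ ⟨i - 1, h⟩).val + 1 else 0

/-- the sequence `s^i` of a list `S = (s^1, …, s^n)`, `i` being 1-indexed. -/
def sget {n r : ℕ} (S : Fin n → Seq r) (i : ℕ) : Seq r :=
  if h : i - 1 < n then S ⟨i - 1, h⟩ else 0

/-- the condition for `i` to belong to `Des_{R,S}(σ)`:
`s^{σ_i} > s^{σ_{i+1}} − χ(σ_{i+1} < σ_i ∧ σ_{i+1} ≁_R σ_i) − χ(σ_{i+1} > σ_i ∧ σ_i ∼_R σ_{i+1})`. -/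
def desCond {n r : ℕ} (R : Finset ℕ) (S : Fin n → Seq r) (σ : Equiv.Perm (Fin n)) (i : ℕ) :
    Prop :=
  if (pget σ (i+1) < pget σ i ∧ ¬ RNbr R (pget σ (i+1)) (pget σ i)) ∨
      (pget σ i < pget σ (i+1) ∧ RNbr R (pget σ i) (pget σ (i+1)))
  then lexLe (sget S (pget σ (i+1))) (sget S (pget σ i))
  else lexLt (sget S (pget σ (i+1))) (sget S (pget σ i))

/-- `Des_{R,S}(σ) ⊆ {1, …, n−1}` (1-indexed positions). -/
def DesSet {n r : ℕ} (R : Finset ℕ) (S : Fin n → Seq r) (σ : Equiv.Perm (Fin n)) : Finset ℕ :=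
  (Finset.Icc 1 (n-1)).filter (fun i => desCond R S σ i)

/-- `Comaj_{R,S}(σ) = ∑_{i ∈ Des_{R,S}(σ)} (n − i)`. -/
def Comaj {n r : ℕ} (R : Finset ℕ) (S : Fin n → Seq r) (σ : Equiv.Perm (Fin n)) : ℕ :=
  ∑ i ∈ DesSet R S σ, (n - i)

/-- `s^i` is read before `s^j` in the reading order of `S` (with respect to `R`);
`i, j` are 1-indexed. -/
def readBefore {n r : ℕ} (R : Finset ℕ) (S : Fin n → Seq r) (i j : ℕ) : Prop :=
  lexLt (sget S i) (sget S j) ∨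
    (sget S i = sget S j ∧ ((i < j ∧ ¬ RNbr R i j) ∨ (j < i ∧ RNbr R j i)))

/-- `IsReading R S σ` says that the reading permutation `σ_R(S)` equals `σ`,
i.e. `σ` lists `1, …, n` in the reading order of `S`. -/
def IsReading {n r : ℕ} (R : Finset ℕ) (S : Fin n → Seq r) (σ : Equiv.Perm (Fin n)) : Prop :=
  ∀ i ∈ Finset.Icc 1 (n-1), readBefore R S (pget σ i) (pget σ (i+1))

/-- the operator `Z_{R,σ} : (ℕ^r)^n → (ℕ^{r+1})^n`, prepending to `s^v` the number of
descents of `σ` (w.r.t. `R, S`) at positions strictly before the position of `v` in `σ`. -/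
def Zop {n r : ℕ} (R : Finset ℕ) (σ : Equiv.Perm (Fin n)) (S : Fin n → Seq r) :
    Fin n → Seq (r+1) :=
  fun v => Fin.cons ((DesSet R S σ ∩ Finset.Ico 1 ((σ.symm v).val + 1)).card) (S v)

/-- `Zvec R σs i = Z_{R,σ^i} ⋯ Z_{R,σ^1}(∅)` where `σ^{j+1} = σs j`. -/
def Zvec {n : ℕ} (R : Finset ℕ) (σs : ℕ → Equiv.Perm (Fin n)) : (i : ℕ) → Fin n → Seq i
  | 0 => fun _ => (0 : Seq 0)
  | (i+1) => Zop R (σs i) (Zvec R σs i)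

/-- extend a finite vector of permutations to `ℕ`, by the identity. -/
def extFun {n r : ℕ} (σv : Fin r → Equiv.Perm (Fin n)) : ℕ → Equiv.Perm (Fin n) :=
  fun j => if h : j < r then σv ⟨j, h⟩ else 1

/-- `comajI R k σv i = comaj^i_R(σ⃗)` for `1 ≤ i ≤ k`, where `σ⃗ = σv` has length `k−1`
and `σ^k = ε`. -/
def comajI {n : ℕ} (R : Finset ℕ) (k : ℕ) (σv : Fin (k-1) → Equiv.Perm (Fin n)) (i : ℕ) : ℕ :=
  Comaj R (Zvec R (extFun σv) (i-1)) (extFun σv (i-1))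

/-- the exponent of the monomial `q^S` for `S ∈ (ℕ^r)^n` : the (0-indexed) variable `i`
(that is, `q_{i+1}`) records the `(r−i)`-th (0-indexed: `r−1−i`-th) coordinates. -/
def expOf {n r : ℕ} (S : Fin n → Seq r) : Fin r →₀ ℕ :=
  Finsupp.equivFunOnFinite.symm (fun i => ∑ j : Fin n, S j (Fin.rev i))

/-- the formal power series whose coefficient at a monomial `d` counts the elements
`a : α` satisfying `P a d`. -/
def countSeriesP {σty α : Type*} (P : α → (σty →₀ ℕ) → Prop) : MvPowerSeries σty ℤ :=
  fun d => (Nat.card {a : α // P a d} : ℤ)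

/-- `∑_{S ∈ (ℕ^r)^n, P S} q^S`. -/
def countSeries {n r : ℕ} (P : (Fin n → Seq r) → Prop) : MvPowerSeries (Fin r) ℤ :=
  countSeriesP (fun S d => P S ∧ expOf S = d)

/-- the Pochhammer factor `(q_i; q_i)_n = ∏_{j=1}^n (1 − q_i^j)`. -/
def pochOne {r : ℕ} (n : ℕ) (i : Fin r) : MvPowerSeries (Fin r) ℤ :=
  ∏ j ∈ Finset.Icc 1 n, (1 - (MvPowerSeries.X i : MvPowerSeries (Fin r) ℤ) ^ j)

/-- `∏_{i=1}^{r} (q_i; q_i)_n`. -/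
def pochAll (n r : ℕ) : MvPowerSeries (Fin r) ℤ :=
  ∏ i : Fin r, pochOne n i

/-- the exponent of `q_1^{comaj¹_R(σ⃗)} ⋯ q_k^{comaj^k_R(σ⃗)}`. -/
def comajExp {n : ℕ} (R : Finset ℕ) (k : ℕ) (σv : Fin (k-1) → Equiv.Perm (Fin n)) :
    Fin k →₀ ℕ :=
  Finsupp.equivFunOnFinite.symm (fun i => comajI R k σv (i.val + 1))

/-- A standard Young tableau of shape `μ` (with `μ.card` cells), recorded by the
position `pos i` of each (1-indexed) entry `i ∈ {1, …, μ.card}`; entries increase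
left-to-right along rows and down columns (matrix convention), and `pos` is a
bijection from `{1, …, μ.card}` onto the cells of `μ` (normalized by `0` outside). -/
structure SYT (μ : YoungDiagram) where
  pos : ℕ → ℕ × ℕ
  mem : ∀ i ∈ Finset.Icc 1 μ.card, pos i ∈ μ
  inj : ∀ i ∈ Finset.Icc 1 μ.card, ∀ j ∈ Finset.Icc 1 μ.card, pos i = pos j → i = j
  surj : ∀ c ∈ μ, ∃ i ∈ Finset.Icc 1 μ.card, pos i = c
  row_inc : ∀ i ∈ Finset.Icc 1 μ.card, ∀ j ∈ Finset.Icc 1 μ.card,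
    (pos i).1 = (pos j).1 → (pos i).2 < (pos j).2 → i < j
  col_inc : ∀ i ∈ Finset.Icc 1 μ.card, ∀ j ∈ Finset.Icc 1 μ.card,
    (pos i).2 = (pos j).2 → (pos i).1 < (pos j).1 → i < j
  junk : ∀ i, i ∉ Finset.Icc 1 μ.card → pos i = 0

/-- `des(T)` : the set of `i ∈ {1, …, n−1}` such that `i+1` lies in a strictly
higher row of `T` than `i` (in matrix convention: a strictly larger row index). -/
def desSYT {μ : YoungDiagram} (T : SYT μ) : Finset ℕ :=
  (Finset.Icc 1 (μ.card - 1)).filter (fun i => (T.pos i).1 < (T.pos (i+1)).1)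

/-- the ordinary descent set `des(π) = {i : π_i > π_{i+1}}` (1-indexed). -/
def desPerm {n : ℕ} (π : Equiv.Perm (Fin n)) : Finset ℕ :=
  (Finset.Icc 1 (n-1)).filter (fun i => pget π (i+1) < pget π i)

/-- `comaj(π) = ∑_{i ∈ des(π)} (n − i)`. -/
def comajP {n : ℕ} (π : Equiv.Perm (Fin n)) : ℕ :=
  ∑ i ∈ desPerm π, (n - i)


/-! ### Auxiliary lemmas for `des_empty_set` -/

private lemma lexLt_trans' {r : ℕ} {a b c : Seq r} (h1 : lexLt a b) (h2 : lexLt b c) :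
    lexLt a c := by
  have := @Pi.Lex.isStrictOrder (Fin r) (fun _ => ℕ) _ _
  exact this.trans (toLex a) (toLex b) (toLex c) h1 h2

private lemma lexLt_irrefl' {r : ℕ} (a : Seq r) : ¬ lexLt a a := by
  have := @Pi.Lex.isStrictOrder (Fin r) (fun _ => ℕ) _ _
  exact this.irrefl (toLex a)

private lemma lexLt_trichotomy' {r : ℕ} (a b : Seq r) : lexLt a b ∨ a = b ∨ lexLt b a := by
  have := Pi.isTrichotomous_lex (fun i j : Fin r => i < j) (fun a b : ℕ => a < b)
    (IsWellFounded.wf)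
  exact Classical.byContradiction fun h => by
    simp only [not_or] at h
    exact h.2.1 (this.trichotomous a b h.1 h.2.2)

private lemma rnbr_empty_iff (a b : ℕ) : RNbr ∅ a b ↔ a = b := by
  constructor
  · intro h
    by_contra hne
    have hlt : min a b < max a b := by omega
    have := h (min a b) (Finset.mem_Ico.2 ⟨le_refl _, hlt⟩)
    simp at this
  · intro h
    subst h
    intro t ht
    rw [Finset.mem_Ico] at ht
    omega

private lemma pget_eq {n : ℕ} (σ : Equiv.Perm (Fin n)) {i : ℕ} (h : i - 1 < n) :
    pget σ i = (σ ⟨i - 1, h⟩).val + 1 := dif_pos h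

private lemma sget_fin {n r : ℕ} (S : Fin n → Seq r) (u : Fin n) :
    sget S (u.val + 1) = S u := by
  have h : u.val + 1 - 1 < n := by omega
  rw [sget, dif_pos h]
  exact congrArg S (Fin.ext (by simp))

/-- The strict total order in which the reading permutation lists the indices. -/
private def LtS {n r : ℕ} (S : Fin n → Seq r) (u v : Fin n) : Prop :=
  lexLt (S u) (S v) ∨ (S u = S v ∧ u < v)

private lemma ltS_trans {n r : ℕ} {S : Fin n → Seq r} {u v w : Fin n}
    (h1 : LtS S u v) (h2 : LtS S v w) : LtS S u w := by
  rcases h1 with h1 | ⟨h1, h1'⟩ <;> rcases h2 with h2 | ⟨h2, h2'⟩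
  · exact Or.inl (lexLt_trans' h1 h2)
  · exact Or.inl (h2 ▸ h1)
  · exact Or.inl (h1 ▸ h2)
  · exact Or.inr ⟨h1.trans h2, h1'.trans h2'⟩

private lemma ltS_asymm {n r : ℕ} {S : Fin n → Seq r} {u v : Fin n}
    (h1 : LtS S u v) (h2 : LtS S v u) : False := by
  have := ltS_trans h1 h2
  rcases this with h | ⟨_, h⟩
  · exact lexLt_irrefl' _ h
  · exact lt_irrefl _ h

private lemma ltS_total {n r : ℕ} (S : Fin n → Seq r) {u v : Fin n} (h : u ≠ v) :
    LtS S u v ∨ LtS S v u := by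
  rcases lexLt_trichotomy' (S u) (S v) with h1 | h1 | h1
  · exact Or.inl (Or.inl h1)
  · rcases lt_or_gt_of_ne h with h2 | h2
    · exact Or.inl (Or.inr ⟨h1, h2⟩)
    · exact Or.inr (Or.inr ⟨h1.symm, h2⟩)
  · exact Or.inr (Or.inl h1)

private lemma reading_adj {n r : ℕ} (hn : 1 ≤ n) {S : Fin n → Seq r}
    {τ : Equiv.Perm (Fin n)} (hτ : IsReading ∅ S τ)
    {p : ℕ} (hp1 : p + 1 < n) :
    LtS S (τ ⟨p, by omega⟩) (τ ⟨p + 1, hp1⟩) := by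
  have hmem : p + 1 ∈ Finset.Icc 1 (n - 1) := by
    rw [Finset.mem_Icc]; omega
  have h := hτ (p + 1) hmem
  have hp : p < n := by omega
  have e1 : pget τ (p + 1) = (τ ⟨p, hp⟩).val + 1 := by
    rw [pget_eq τ (show p + 1 - 1 < n by omega)]
    exact congrArg (fun x => (τ x).val + 1) (Fin.ext (by simp))
  have e2 : pget τ (p + 1 + 1) = (τ ⟨p + 1, hp1⟩).val + 1 := by
    rw [pget_eq τ (show p + 1 + 1 - 1 < n by omega)]
    exact congrArg (fun x => (τ x).val + 1) (Fin.ext (by simp))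
  rw [e1, e2] at h
  set u : Fin n := τ ⟨p, hp⟩ with hu
  set v : Fin n := τ ⟨p + 1, hp1⟩ with hv
  have huv : u ≠ v := by
    intro he
    have := τ.injective he
    simp only [Fin.mk.injEq] at this
    omega
  rw [readBefore, sget_fin, sget_fin] at h
  rcases h with h | ⟨heq, hc⟩
  · exact Or.inl h
  · rcases hc with ⟨hlt, _⟩ | ⟨hlt, hnbr⟩
    · refine Or.inr ⟨heq, ?_⟩
      exact Fin.lt_def.2 (by omega)
    · exfalso
      rw [rnbr_empty_iff] at hnbr
      omega

private lemma reading_mono {n r : ℕ} (hn : 1 ≤ n) {S : Fin n → Seq r}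
    {τ : Equiv.Perm (Fin n)} (hτ : IsReading ∅ S τ) :
    ∀ (q : ℕ) (hq : q < n) (p : Fin n), p.val < q → LtS S (τ p) (τ ⟨q, hq⟩) := by
  intro q
  induction q with
  | zero => intro _ p hp; omega
  | succ q ih =>
    intro hq p hp
    have hqn : q < n := by omega
    have hadj : LtS S (τ ⟨q, hqn⟩) (τ ⟨q + 1, hq⟩) := reading_adj hn hτ hq
    rcases Nat.lt_or_ge p.val q with h | h
    · exact ltS_trans (ih hqn p h) hadj
    · have : p = (⟨q, hqn⟩ : Fin n) := by
        apply Fin.ext; simp; omega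
      rw [this]; exact hadj

private lemma reading_lt_iff {n r : ℕ} (hn : 1 ≤ n) {S : Fin n → Seq r}
    {τ : Equiv.Perm (Fin n)} (hτ : IsReading ∅ S τ) (u v : Fin n) :
    τ.symm u < τ.symm v ↔ LtS S u v := by
  constructor
  · intro h
    have := reading_mono hn hτ (τ.symm v).val (τ.symm v).isLt (τ.symm u) h
    simpa using this
  · intro h
    rcases lt_trichotomy (τ.symm u) (τ.symm v) with h1 | h1 | h1
    · exact h1
    · exfalso
      have : u = v := by
        have := congrArg τ h1
        simpa using this
      subst this
      rcases h with h | ⟨_, h⟩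
      · exact lexLt_irrefl' _ h
      · exact lt_irrefl _ h
    · exfalso
      have := reading_mono hn hτ (τ.symm u).val (τ.symm u).isLt (τ.symm v) h1
      simp only [Fin.eta, Equiv.apply_symm_apply] at this
      exact ltS_asymm h this

/-- **Lemma.**  For `R = ∅` : `Des_{∅,S}(σ) = des(τ⁻¹σ)` where `τ = σ_∅(S)`. -/
theorem des_empty_set (n r : ℕ) (hn : 1 ≤ n) (S : Fin n → Seq r)
    (σ τ : Equiv.Perm (Fin n)) (hτ : IsReading ∅ S τ) :
    DesSet ∅ S σ = desPerm (τ⁻¹ * σ) := by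
  ext i
  simp only [DesSet, desPerm, Finset.mem_filter]
  refine and_congr_right fun hi => ?_
  rw [Finset.mem_Icc] at hi
  have h1 : i - 1 < n := by omega
  have h2 : i < n := by omega
  have h3 : i + 1 - 1 < n := by omega
  set a : Fin n := ⟨i - 1, h1⟩ with ha
  set b : Fin n := ⟨i + 1 - 1, h3⟩ with hb
  have hab : a ≠ b := by
    intro h
    rw [ha, hb, Fin.mk.injEq] at h
    omega
  set u : Fin n := σ a with hu
  set v : Fin n := σ b with hv
  have huv : u ≠ v := fun h => hab (σ.injective h)
  have epg1 : pget σ i = u.val + 1 := pget_eq σ h1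
  have epg2 : pget σ (i + 1) = v.val + 1 := pget_eq σ h3
  have epm1 : pget (τ⁻¹ * σ) i = (τ.symm u).val + 1 := by
    rw [pget_eq (τ⁻¹ * σ) h1]
    rfl
  have epm2 : pget (τ⁻¹ * σ) (i + 1) = (τ.symm v).val + 1 := by
    rw [pget_eq (τ⁻¹ * σ) h3]
    rfl
  rw [epm1, epm2, Nat.add_lt_add_iff_right]
  have hrhs : ((τ.symm v).val < (τ.symm u).val) ↔ LtS S v u := by
    rw [← Fin.lt_def]
    exact reading_lt_iff hn hτ v u
  rw [hrhs]
  rw [desCond, epg1, epg2, sget_fin, sget_fin]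
  have hne : v.val + 1 ≠ u.val + 1 := by
    intro h
    exact huv (Fin.ext (by omega))
  have hcond : ((v.val + 1 < u.val + 1 ∧ ¬ RNbr ∅ (v.val + 1) (u.val + 1)) ∨
      (u.val + 1 < v.val + 1 ∧ RNbr ∅ (u.val + 1) (v.val + 1))) ↔ v < u := by
    rw [rnbr_empty_iff, rnbr_empty_iff, Fin.lt_def]
    constructor
    · rintro (⟨h, _⟩ | ⟨h, he⟩)
      · omega
      · omega
    · intro h
      exact Or.inl ⟨by omega, by omega⟩
  by_cases hc : v < u
  · rw [if_pos (hcond.2 hc)]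
    unfold lexLe LtS
    constructor
    · rintro (h | h)
      · exact Or.inl h
      · exact Or.inr ⟨h, hc⟩
    · rintro (h | ⟨h, _⟩)
      · exact Or.inl h
      · exact Or.inr h
  · rw [if_neg (fun h => hc (hcond.1 h))]
    unfold LtS
    constructor
    · exact fun h => Or.inl h
    · rintro (h | ⟨_, h⟩)
      · exact h
      · exact absurd h hc

end

end RomeroComaj
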